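/- Let τ ∈ (0,1), δ > 0, μ ∈ ℝ, and let W be a standard exponential random variable (rate 1) and Z an independent standard normal variable. Set ξ̃ = (1 − 2τ)/(τ(1 − τ)) and σ̃ = √(2/(τ(1 − τ))), and define Y = μ + δ ξ̃ W + √W · δ σ̃ Z. Then the law of Y has density f_AL(y; μ, δ, τ) = (τ(1 − τ)/δ) exp(−ρ_τ((y − μ)/δ)), where ρ_τ(x) = x(τ − 1{x<0}); that is, the univariate marginal of the constrained Multivariate Asymmetric Laplace mixture with scale δ, computed at quantile level τ, is the Asymmetric Laplace distribution AL(μ, δ, τ). -/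

import Mathlib

open MeasureTheory ProbabilityTheory Real
open Set ENNReal

/-- The check (loss) function at level `τ`: `ρ_τ(x) = x(τ - 1{x<0})`. -/
noncomputable def checkLoss (τ x : ℝ) : ℝ := x * (τ - if x < 0 then 1 else 0)

lemma lintegral_image_deriv {s : Set ℝ} {f f' : ℝ → ℝ} (hs : MeasurableSet s)
    (hf' : ∀ x ∈ s, HasDerivWithinAt f (f' x) s x) (hf : Set.InjOn f s) (g : ℝ → ℝ≥0∞) :
    ∫⁻ x in f '' s, g x = ∫⁻ x in s, ENNReal.ofReal |f' x| * g (f x) := by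
  simpa only [ContinuousLinearMap.det_toSpanSingleton] using
    lintegral_image_eq_lintegral_abs_det_fderiv_mul volume hs
      (fun x hx => (hf' x hx).hasFDerivWithinAt) hf g

lemma glasser_surj {b c : ℝ} (hb : 0 < b) (hc : 0 < c) :
    (fun t => b * t - c / t) '' Ioi (0:ℝ) = univ := by
  apply eq_univ_of_forall
  intro y
  set t1 : ℝ := min 1 (c / (b + |y| + 1)) with ht1def
  set t2 : ℝ := max 1 ((|y| + c) / b) with ht2def
  have hby : 0 < b + |y| + 1 := by positivity
  have ht1pos : 0 < t1 := lt_min one_pos (by positivity)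
  have ht12 : t1 ≤ t2 := le_trans (min_le_left _ _) (le_max_left _ _)
  have hsub : Icc t1 t2 ⊆ Ioi (0:ℝ) := fun x hx => lt_of_lt_of_le ht1pos hx.1
  have hcont : ContinuousOn (fun t => b * t - c / t) (Icc t1 t2) := by
    apply ContinuousOn.sub (Continuous.continuousOn (by continuity))
    exact ContinuousOn.div continuousOn_const continuousOn_id
      (fun x hx => ne_of_gt (hsub hx))
  have h1 : b * t1 - c / t1 ≤ y := by
    have h1a : b * t1 ≤ b := by
      nlinarith [min_le_left (1:ℝ) (c / (b + |y| + 1))]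
    have h1b : b + |y| + 1 ≤ c / t1 := by
      rw [le_div_iff₀ ht1pos]
      calc (b + |y| + 1) * t1 ≤ (b + |y| + 1) * (c / (b + |y| + 1)) := by
            exact mul_le_mul_of_nonneg_left (min_le_right _ _) (le_of_lt hby)
        _ = c := by field_simp
    have := abs_nonneg y
    have := neg_abs_le y
    linarith
  have h2 : y ≤ b * t2 - c / t2 := by
    have h2a : |y| + c ≤ b * t2 := by
      rw [ht2def]
      calc |y| + c = b * ((|y| + c) / b) := by field_simp
        _ ≤ b * max 1 ((|y| + c) / b) := by
            exact mul_le_mul_of_nonneg_left (le_max_right _ _) (le_of_lt hb)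
    have h2b : c / t2 ≤ c := by
      apply div_le_self (le_of_lt hc) (le_max_left _ _)
    have := le_abs_self y
    linarith
  have := intermediate_value_Icc ht12 hcont
  have hy : y ∈ Icc (b * t1 - c / t1) (b * t2 - c / t2) := ⟨h1, h2⟩
  obtain ⟨x, hx, hfx⟩ := this hy
  exact ⟨x, hsub hx, hfx⟩

lemma lintegral_gauss : ∫⁻ u : ℝ, ENNReal.ofReal (exp (-u^2)) = ENNReal.ofReal (√π) := by
  rw [← ofReal_integral_eq_lintegral_ofReal]
  · congr 1
    simpa using integral_gaussian 1
  · simpa using integrable_exp_neg_mul_sq (one_pos)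
  · exact Filter.Eventually.of_forall fun x => (exp_pos _).le

lemma glasser_zero {b : ℝ} (hb : 0 < b) :
    ∫⁻ t in Ioi (0:ℝ), ENNReal.ofReal (exp (-(b*t)^2)) = ENNReal.ofReal (√π/(2*b)) := by
  rw [← ofReal_integral_eq_lintegral_ofReal]
  · congr 1
    have : ∀ t : ℝ, exp (-(b*t)^2) = exp (-(b^2) * t^2) := by intro t; ring_nf
    rw [show (fun t => exp (-(b*t)^2)) = fun t => exp (-(b^2) * t^2) from funext this]
    rw [integral_gaussian_Ioi (b^2)]
    rw [Real.sqrt_div' π (by positivity), Real.sqrt_sq hb.le]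
    ring
  · have : (fun t => exp (-(b*t)^2)) = fun t => exp (-(b^2) * t^2) := by
      funext t; ring_nf
    rw [this]
    exact (integrable_exp_neg_mul_sq (by positivity)).integrableOn
  · exact Filter.Eventually.of_forall fun x => (exp_pos _).le

lemma glasser_pos {b c : ℝ} (hb : 0 < b) (hc : 0 < c) :
    ∫⁻ t in Ioi (0:ℝ), ENNReal.ofReal (exp (-(b*t - c/t)^2))
      = ENNReal.ofReal (√π/(2*b)) := by
  set f : ℝ → ℝ := fun t => b * t - c / t with hfdef
  set g : ℝ → ℝ≥0∞ := fun u => ENNReal.ofReal (exp (-u^2)) with hgdef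
  have hmeasg : Measurable g := by fun_prop
  have hmeasf : Measurable f := by
    apply Measurable.sub (measurable_id.const_mul b)
    exact measurable_const.div measurable_id
  have hf' : ∀ x ∈ Ioi (0:ℝ), HasDerivWithinAt f (b + c / x^2) (Ioi 0) x := by
    intro x hx
    have hx0 : x ≠ 0 := ne_of_gt hx
    have h1 : HasDerivAt (fun t : ℝ => b * t) b x := by
      simpa using (hasDerivAt_id x).const_mul b
    have h2 : HasDerivAt (fun t : ℝ => c / t) (c * (-(x^2)⁻¹)) x := by
      simpa [div_eq_mul_inv] using (hasDerivAt_inv hx0).const_mul c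
    have h3 := h1.sub h2
    have h4 : b - c * (-(x^2)⁻¹) = b + c / x^2 := by field_simp; ring
    exact (h4 ▸ h3).hasDerivWithinAt
  have hinj : Set.InjOn f (Ioi 0) := by
    intro s hs t ht h
    simp only [hfdef] at h
    have hs0 : (0:ℝ) < s := hs
    have ht0 : (0:ℝ) < t := ht
    have h' : (s - t) * (b * s * t + c) = 0 := by
      field_simp at h
      nlinarith [h]
    have hpos : 0 < b * s * t + c := by positivity
    have := mul_eq_zero.mp h'
    rcases this with h0 | h0
    · linarith
    · linarith
  set I : ℝ≥0∞ := ∫⁻ t in Ioi (0:ℝ), g (f t) with hIdef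
  -- main change of variables
  have key : ENNReal.ofReal (√π) = ∫⁻ x in Ioi (0:ℝ),
      ENNReal.ofReal |b + c / x^2| * g (f x) := by
    rw [← lintegral_image_deriv measurableSet_Ioi hf' hinj g, glasser_surj hb hc,
      Measure.restrict_univ, lintegral_gauss]
  -- split the integrand
  have split : ∫⁻ x in Ioi (0:ℝ), ENNReal.ofReal |b + c / x^2| * g (f x)
      = (ENNReal.ofReal b * I) + ∫⁻ x in Ioi (0:ℝ), ENNReal.ofReal (c / x^2) * g (f x) := by
    rw [hIdef, ← lintegral_const_mul (ENNReal.ofReal b)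
      (show Measurable (fun t => g (f t)) from hmeasg.comp hmeasf), ← lintegral_add_left]
    · apply setLIntegral_congr_fun measurableSet_Ioi
      intro x hx
      beta_reduce
      have hx0 : (0:ℝ) < x := hx
      have h1 : (0:ℝ) ≤ b + c / x^2 := by positivity
      rw [abs_of_nonneg h1, ENNReal.ofReal_add hb.le (by positivity), add_mul]
    · exact (measurable_const.mul (hmeasg.comp hmeasf))
  -- the J = I trick via t ↦ c/(b t)
  have jtrick : ∫⁻ x in Ioi (0:ℝ), ENNReal.ofReal (c / x^2) * g (f x)
      = ENNReal.ofReal b * I := by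
    set h : ℝ → ℝ := fun t => c / (b * t) with hhdef
    have hh' : ∀ x ∈ Ioi (0:ℝ), HasDerivWithinAt h (-(c/b) / x^2) (Ioi 0) x := by
      intro x hx
      have hx0 : x ≠ 0 := ne_of_gt hx
      have h2 : HasDerivAt (fun t : ℝ => (c/b) * t⁻¹) ((c/b) * (-(x^2)⁻¹)) x :=
        (hasDerivAt_inv hx0).const_mul (c/b)
      have heq : h = fun t : ℝ => (c/b) * t⁻¹ := by
        funext t; simp only [hhdef]; field_simp
      rw [heq]
      have h4 : (c/b) * (-(x^2)⁻¹) = -(c/b) / x^2 := by field_simp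
      exact (h4 ▸ h2).hasDerivWithinAt
    have hinv : ∀ s : ℝ, 0 < s → c / (b * h s) = s := by
      intro s hs
      simp only [hhdef]
      field_simp
    have hinjh : Set.InjOn h (Ioi 0) := by
      intro s hs t ht hst
      rw [← hinv s hs, ← hinv t ht, hst]
    have himg : h '' Ioi (0:ℝ) = Ioi 0 := by
      apply Subset.antisymm
      · rintro _ ⟨t, ht, rfl⟩
        have : (0:ℝ) < t := ht
        exact div_pos hc (by positivity)
      · intro y hy
        have hy0 : (0:ℝ) < y := hy
        refine ⟨c / (b * y), div_pos hc (by positivity), ?_⟩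
        simp only [hhdef]
        field_simp
    have cov := lintegral_image_deriv measurableSet_Ioi hh' hinjh
      (fun x => ENNReal.ofReal b * g (f x))
    rw [himg] at cov
    rw [hIdef, ← lintegral_const_mul (ENNReal.ofReal b)
      (show Measurable (fun t => g (f t)) from hmeasg.comp hmeasf), cov]
    symm
    apply setLIntegral_congr_fun measurableSet_Ioi
    intro x hx
    beta_reduce
    have hx0 : (0:ℝ) < x := hx
    have hfh : f (h x) = -(f x) := by
      simp only [hfdef, hhdef]
      field_simp
      ring
    have hgfh : g (f (h x)) = g (f x) := by
      rw [hfh]; simp only [hgdef, neg_sq]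
    rw [hgfh]
    have habs : |(-(c/b) / x^2)| = (c/b) / x^2 := by
      rw [abs_div, abs_neg, abs_of_nonneg (by positivity : (0:ℝ) ≤ c/b),
        abs_of_nonneg (by positivity : (0:ℝ) ≤ x^2)]
    rw [habs, ← mul_assoc, ← ENNReal.ofReal_mul (by positivity)]
    congr 2
    field_simp
  have final : ENNReal.ofReal (2*b) * I = ENNReal.ofReal (√π) := by
    rw [key, split, jtrick, ← two_mul, ← mul_assoc]
    congr 1
    rw [← ENNReal.ofReal_ofNat, ← ENNReal.ofReal_mul (by norm_num)]
  have h2b : ENNReal.ofReal (2*b) ≠ 0 := (ENNReal.ofReal_pos.mpr (by positivity)).ne'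
  have goal : I = ENNReal.ofReal (√π) / ENNReal.ofReal (2*b) :=
    (ENNReal.eq_div_iff h2b ENNReal.ofReal_ne_top).mpr final
  show I = ENNReal.ofReal (√π/(2*b))
  rw [goal, ← ENNReal.ofReal_div_of_pos (by positivity)]

lemma glasser {b c : ℝ} (hb : 0 < b) (hc : 0 ≤ c) :
    ∫⁻ t in Ioi (0:ℝ), ENNReal.ofReal (exp (-(b*t - c/t)^2))
      = ENNReal.ofReal (√π/(2*b)) := by
  rcases eq_or_lt_of_le hc with h | h
  · simp only [← h, zero_div, sub_zero]
    exact glasser_zero hb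
  · exact glasser_pos hb h
lemma lintegral_bessel {A B : ℝ} (hA : 0 ≤ A) (hB : 0 < B) :
    ∫⁻ w in Ioi (0:ℝ), ENNReal.ofReal ((√w)⁻¹ * exp (-(A/w + B*w)))
      = ENNReal.ofReal (√(π/B) * exp (-(2*√(A*B)))) := by
  set G : ℝ → ℝ≥0∞ := fun w => ENNReal.ofReal ((√w)⁻¹ * exp (-(A/w + B*w))) with hGdef
  have hf' : ∀ x ∈ Ioi (0:ℝ), HasDerivWithinAt (fun t : ℝ => t^2) (2*x) (Ioi 0) x := by
    intro x hx
    simpa using ((hasDerivAt_pow 2 x).hasDerivWithinAt)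
  have hinj : Set.InjOn (fun t : ℝ => t^2) (Ioi 0) := by
    intro s hs t ht hst
    simp only at hst
    have hs0 : (0:ℝ) < s := hs
    have ht0 : (0:ℝ) < t := ht
    nlinarith [hst]
  have himg : (fun t : ℝ => t^2) '' Ioi 0 = Ioi 0 := by
    apply Subset.antisymm
    · rintro _ ⟨t, ht, rfl⟩
      exact pow_pos (show (0:ℝ) < t from ht) 2
    · intro y hy
      exact ⟨√y, sqrt_pos.mpr hy, sq_sqrt (le_of_lt hy)⟩
  have cov := lintegral_image_deriv measurableSet_Ioi hf' hinj G
  rw [himg] at cov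
  rw [cov]
  have ptwise : ∀ t ∈ Ioi (0:ℝ), ENNReal.ofReal |2*t| * G (t^2)
      = ENNReal.ofReal (2 * exp (-(2*√(A*B)))) *
        ENNReal.ofReal (exp (-(√B * t - √A / t)^2)) := by
    intro t ht
    have ht0 : (0:ℝ) < t := ht
    have h1 : √(t^2) = t := sqrt_sq ht0.le
    have h2 : A/t^2 + B*t^2 = (√B * t - √A / t)^2 + 2*√(A*B) := by
      have e1 : (√B * t)^2 = B * t^2 := by
        rw [mul_pow, sq_sqrt hB.le]
      have e2 : (√A / t)^2 = A / t^2 := by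
        rw [div_pow, sq_sqrt hA]
      have e3 : (√B * t) * (√A / t) = √(A*B) := by
        rw [mul_comm A B, sqrt_mul hB.le]
        field_simp
      nlinarith [e1, e2, e3]
    rw [abs_of_nonneg (by positivity : (0:ℝ) ≤ 2*t)]
    rw [← ENNReal.ofReal_mul (by positivity), ← ENNReal.ofReal_mul (by positivity)]
    congr 1
    simp only [hGdef, h1]
    rw [h2]
    rw [show -((√B * t - √A / t)^2 + 2*√(A*B))
        = (-(2*√(A*B))) + (-(√B * t - √A / t)^2) by ring, exp_add]
    field_simp
  rw [setLIntegral_congr_fun measurableSet_Ioi ptwise]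
  rw [lintegral_const_mul' _ _ ENNReal.ofReal_ne_top]
  rw [glasser (sqrt_pos.mpr hB) (sqrt_nonneg A)]
  rw [← ENNReal.ofReal_mul (by positivity)]
  congr 1
  rw [Real.sqrt_div pi_pos.le]
  have hsb : √B ≠ 0 := ne_of_gt (sqrt_pos.mpr hB)
  field_simp


lemma sqrt_eq_of_sq_eq {u v : ℝ} (hu : 0 ≤ u) (hv : 0 ≤ v) (h : u^2 = v^2) : u = v := by
  rw [← Real.sqrt_sq hu, h, Real.sqrt_sq hv]

lemma mixture_core {τ : ℝ} (hτ1 : 0 < τ) (hτ2 : τ < 1) {ξ σ : ℝ}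
    (hξ : ξ = (1 - 2 * τ) / (τ * (1 - τ))) (hσ : σ = Real.sqrt (2 / (τ * (1 - τ))))
    (a : ℝ) :
    ∫⁻ w in Ioi (0:ℝ), ENNReal.ofReal
        (exp (-w) * ((√w * σ)⁻¹ * gaussianPDFReal 0 1 ((a - ξ*w)/(√w * σ))))
      = ENNReal.ofReal (τ * (1-τ) * exp (-(checkLoss τ a))) := by
  set p : ℝ := τ * (1 - τ) with hpdef
  have hp : 0 < p := by rw [hpdef]; nlinarith
  have hσpos : 0 < σ := by rw [hσ]; positivity
  have hσ2 : σ^2 = 2/p := by rw [hσ, sq_sqrt (by positivity)]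
  set A : ℝ := a^2 * p / 4 with hAdef
  set B : ℝ := 1 / (4*p) with hBdef
  have hA : 0 ≤ A := by positivity
  have hB : 0 < B := by positivity
  set K : ℝ := (σ * √(2*π))⁻¹ * exp (a*(1-2*τ)/2) with hKdef
  have hKpos : 0 < K := by positivity
  -- pointwise identity on Ioi 0
  have ptwise : ∀ w ∈ Ioi (0:ℝ),
      ENNReal.ofReal (exp (-w) * ((√w * σ)⁻¹ * gaussianPDFReal 0 1 ((a - ξ*w)/(√w * σ))))
      = ENNReal.ofReal K * ENNReal.ofReal ((√w)⁻¹ * exp (-(A/w + B*w))) := by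
    intro w hw
    have hw0 : (0:ℝ) < w := hw
    have hsw : (0:ℝ) < √w := sqrt_pos.mpr hw0
    have hw2 : (√w)^2 = w := sq_sqrt hw0.le
    rw [← ENNReal.ofReal_mul hKpos.le]
    congr 1
    have hexp : -w + (-(((a - ξ*w)/(√w * σ) - 0)^2) / 2)
        = a*(1-2*τ)/2 + (-(A/w + B*w)) := by
      rw [sub_zero, div_pow, mul_pow, hw2, hσ2, hξ, hAdef, hBdef, hpdef]
      have h1 : τ * (1-τ) ≠ 0 := by positivity
      have h1' : (1:ℝ) - τ ≠ 0 := by linarith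
      field_simp
      ring
    simp only [gaussianPDFReal]
    push_cast
    simp only [mul_one]
    calc exp (-w) * ((√w * σ)⁻¹ * ((√(2*π))⁻¹ * exp (-(((a - ξ*w)/(√w * σ) - 0)^2) / 2)))
        = ((σ * √(2*π))⁻¹ * (√w)⁻¹) * (exp (-w) * exp (-(((a - ξ*w)/(√w * σ) - 0)^2) / 2)) := by
          rw [mul_inv]
          ring
      _ = ((σ * √(2*π))⁻¹ * (√w)⁻¹) * exp (a*(1-2*τ)/2 + (-(A/w + B*w))) := by
          rw [← exp_add, hexp]
      _ = K * ((√w)⁻¹ * exp (-(A/w + B*w))) := by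
          rw [exp_add, hKdef]
          ring
  rw [setLIntegral_congr_fun measurableSet_Ioi ptwise,
    lintegral_const_mul' _ _ ENNReal.ofReal_ne_top, lintegral_bessel hA hB,
    ← ENNReal.ofReal_mul hKpos.le]
  congr 1
  -- scalar identity
  have hAB : √(A*B) = |a|/4 := by
    have h1 : A*B = (|a|/4)^2 := by
      rw [hAdef, hBdef]
      field_simp [sq_abs]
      ring
      rw [sq_abs]
    rw [h1, Real.sqrt_sq (by positivity)]
  have hπB : √(π/B) = 2*√(π*p) := by
    have h1 : π/B = (2*√(π*p))^2 := by
      rw [hBdef, mul_pow, sq_sqrt (by positivity : (0:ℝ) ≤ π*p)]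
      field_simp
      ring
    rw [h1, Real.sqrt_sq (by positivity)]
  have hσq : σ * √(2*π) = 2*√(π/p) := by
    apply sqrt_eq_of_sq_eq (by positivity) (by positivity)
    rw [mul_pow, mul_pow, hσ2, sq_sqrt (by positivity : (0:ℝ) ≤ 2*π),
      sq_sqrt (by positivity : (0:ℝ) ≤ π/p)]
    field_simp
  have h5 : (2*√(π/p))⁻¹ * (2*√(π*p)) = p := by
    apply sqrt_eq_of_sq_eq (by positivity) hp.le
    rw [mul_pow, mul_pow, inv_pow, mul_pow, sq_sqrt (by positivity : (0:ℝ) ≤ π/p),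
      sq_sqrt (by positivity : (0:ℝ) ≤ π*p)]
    field_simp
  have hcheck : a*(1-2*τ)/2 - |a|/2 = -(checkLoss τ a) := by
    unfold checkLoss
    rcases lt_or_ge a 0 with h | h
    · rw [if_pos h, abs_of_neg h]; ring
    · rw [if_neg (not_lt.mpr h), abs_of_nonneg h]; ring
  rw [hKdef, hπB, hAB, hσq]
  calc (2*√(π/p))⁻¹ * exp (a*(1-2*τ)/2) * (2*√(π*p) * exp (-(2*(|a|/4))))
      = ((2*√(π/p))⁻¹ * (2*√(π*p))) * (exp (a*(1-2*τ)/2) * exp (-(|a|/2))) := by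
        ring_nf
      _ = p * exp (a*(1-2*τ)/2 - |a|/2) := by rw [h5, ← exp_add]; ring_nf
      _ = p * exp (-(checkLoss τ a)) := by rw [hcheck]

lemma gaussian_affine {c k : ℝ} (hk : 0 < k) {s : Set ℝ} (hs : MeasurableSet s) :
    (gaussianReal 0 1) ((fun z => c + k*z) ⁻¹' s)
      = ∫⁻ y in s, ENNReal.ofReal (k⁻¹ * gaussianPDFReal 0 1 ((y - c)/k)) := by
  have haff : Measurable (fun z : ℝ => c + k*z) := by fun_prop
  have hA : MeasurableSet ((fun z : ℝ => c + k*z) ⁻¹' s) := haff hs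
  rw [gaussianReal_of_var_ne_zero 0 one_ne_zero, withDensity_apply _ hA]
  have hsurj : Function.Surjective (fun z : ℝ => c + k*z) := by
    intro y; exact ⟨(y - c)/k, by field_simp; ring⟩
  have himg : (fun z : ℝ => c + k*z) '' ((fun z : ℝ => c + k*z) ⁻¹' s) = s :=
    Set.image_preimage_eq s hsurj
  have hf' : ∀ x ∈ (fun z : ℝ => c + k*z) ⁻¹' s,
      HasDerivWithinAt (fun z : ℝ => c + k*z) k ((fun z : ℝ => c + k*z) ⁻¹' s) x := by
    intro x _
    have h1 : HasDerivAt (fun z : ℝ => c + k*z) k x := by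
      simpa using (((hasDerivAt_id x).const_mul k).const_add c)
    exact h1.hasDerivWithinAt
  have hinj : Set.InjOn (fun z : ℝ => c + k*z) ((fun z : ℝ => c + k*z) ⁻¹' s) := by
    intro u _ v _ h
    simp only at h
    have := mul_left_cancel₀ (ne_of_gt hk) (by linarith : k*u = k*v)
    exact this
  have cov := lintegral_image_deriv hA hf' hinj
    (fun y => ENNReal.ofReal (k⁻¹ * gaussianPDFReal 0 1 ((y - c)/k)))
  rw [himg] at cov
  rw [cov]
  apply setLIntegral_congr_fun hA
  intro z _
  beta_reduce
  rw [abs_of_pos hk, ← ENNReal.ofReal_mul hk.le, gaussianPDF_def]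
  simp only
  congr 1
  have : (c + k*z - c)/k = z := by field_simp; ring
  rw [this]
  field_simp


lemma mixture_full {τ δ : ℝ} (hτ1 : 0 < τ) (hτ2 : τ < 1) (hδ : 0 < δ) {ξ σ : ℝ}
    (hξ : ξ = (1 - 2 * τ) / (τ * (1 - τ))) (hσ : σ = Real.sqrt (2 / (τ * (1 - τ))))
    (y μ : ℝ) :
    ∫⁻ w in Ioi (0:ℝ), ENNReal.ofReal
        (exp (-w) * ((√w * (δ*σ))⁻¹ * gaussianPDFReal 0 1 ((y - (μ + δ*ξ*w))/(√w * (δ*σ)))))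
      = ENNReal.ofReal (τ*(1-τ)/δ * exp (-(checkLoss τ ((y-μ)/δ)))) := by
  have hp : 0 < τ * (1 - τ) := by nlinarith
  have hσpos : 0 < σ := by rw [hσ]; positivity
  set a : ℝ := (y - μ)/δ with hadef
  have ptwise : ∀ w ∈ Ioi (0:ℝ),
      ENNReal.ofReal (exp (-w) * ((√w * (δ*σ))⁻¹ *
          gaussianPDFReal 0 1 ((y - (μ + δ*ξ*w))/(√w * (δ*σ)))))
      = ENNReal.ofReal δ⁻¹ *
        ENNReal.ofReal (exp (-w) * ((√w * σ)⁻¹ * gaussianPDFReal 0 1 ((a - ξ*w)/(√w * σ)))) := by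
    intro w hw
    have hw0 : (0:ℝ) < w := hw
    have hsw : (0:ℝ) < √w := sqrt_pos.mpr hw0
    have harg : (y - (μ + δ*ξ*w))/(√w * (δ*σ)) = (a - ξ*w)/(√w * σ) := by
      rw [hadef]
      field_simp
      ring
    have hcoef : (√w * (δ*σ))⁻¹ = δ⁻¹ * (√w * σ)⁻¹ := by
      field_simp
    rw [harg, hcoef, ← ENNReal.ofReal_mul (by positivity)]
    congr 1
    ring
  rw [setLIntegral_congr_fun measurableSet_Ioi ptwise,
    lintegral_const_mul' _ _ ENNReal.ofReal_ne_top, mixture_core hτ1 hτ2 hξ hσ a,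
    ← ENNReal.ofReal_mul (by positivity)]
  congr 1
  field_simp

/-- Univariate marginal of the constrained Multivariate Asymmetric Laplace mixture:
with `W` standard exponential, `Z ~ N(0,1)` independent of `W`,
`ξ̃ = (1-2τ)/(τ(1-τ))` and `σ̃ = √(2/(τ(1-τ)))`, the random variable
`Y = μ + δξ̃W + √W δσ̃ Z` has the Asymmetric Laplace density
`f_AL(y; μ, δ, τ) = (τ(1-τ)/δ) exp(-ρ_τ((y-μ)/δ))`, i.e. `Y ~ AL(μ, δ, τ)`. -/
theorem mal_marginal_is_al {Ω : Type*} [MeasurableSpace Ω]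
    (P : Measure Ω) [IsProbabilityMeasure P]
    (τ δ μ : ℝ) (hτ : τ ∈ Set.Ioo (0 : ℝ) 1) (hδ : 0 < δ)
    (W Z : Ω → ℝ) (hW : Measurable W) (hZ : Measurable Z)
    (hWlaw : P.map W =
      volume.withDensity (fun w => ENNReal.ofReal (if 0 < w then exp (-w) else 0)))
    (hZlaw : P.map Z = gaussianReal 0 1)
    (hindep : IndepFun W Z P)
    (ξ σ : ℝ)
    (hξ : ξ = (1 - 2 * τ) / (τ * (1 - τ)))
    (hσ : σ = Real.sqrt (2 / (τ * (1 - τ))))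
    (Y : Ω → ℝ) (hY : ∀ ω, Y ω = μ + δ * ξ * W ω + Real.sqrt (W ω) * (δ * σ) * Z ω) :
    P.map Y = volume.withDensity
      (fun y => ENNReal.ofReal (τ * (1 - τ) / δ * exp (-(checkLoss τ ((y - μ) / δ))))) := by
  obtain ⟨hτ1, hτ2⟩ := hτ
  have hp : 0 < τ * (1 - τ) := by nlinarith
  have hσpos : 0 < σ := by rw [hσ]; positivity
  have hpair : Measurable (fun ω => (W ω, Z ω)) := hW.prodMk hZ
  have hjoint : P.map (fun ω => (W ω, Z ω)) = (P.map W).prod (P.map Z) :=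
    (indepFun_iff_map_prod_eq_prod_map_map hW.aemeasurable hZ.aemeasurable).mp hindep
  set g : ℝ × ℝ → ℝ := fun q => μ + δ * ξ * q.1 + Real.sqrt q.1 * (δ * σ) * q.2 with hgdef
  have hgm : Measurable g := by
    apply Measurable.add
    · exact measurable_const.add (measurable_fst.const_mul _)
    · exact ((measurable_fst.sqrt.mul measurable_const).mul measurable_snd)
  have hYeq : Y = g ∘ (fun ω => (W ω, Z ω)) := funext fun ω => hY ω
  have hmap : P.map Y = ((P.map W).prod (P.map Z)).map g := by
    rw [hYeq, ← Measure.map_map hgm hpair, hjoint]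
  rw [hmap, hWlaw, hZlaw]
  have hdensm : Measurable (fun w : ℝ => ENNReal.ofReal (if 0 < w then exp (-w) else 0)) := by
    apply ENNReal.measurable_ofReal.comp
    exact Measurable.ite measurableSet_Ioi (by fun_prop) measurable_const
  ext s hs
  rw [Measure.map_apply hgm hs, withDensity_apply _ hs]
  rw [Measure.prod_apply (hgm hs)]
  set F : ℝ → ℝ≥0∞ := fun w => (gaussianReal 0 1) (Prod.mk w ⁻¹' (g ⁻¹' s)) with hFdef
  have hFm : Measurable F := measurable_measure_prodMk_left (hgm hs)
  rw [lintegral_withDensity_eq_lintegral_mul _ hdensm hFm]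
  have hind : (fun w : ℝ => ENNReal.ofReal (if 0 < w then exp (-w) else 0)) * F
      = (Ioi (0:ℝ)).indicator (fun w => ENNReal.ofReal (exp (-w)) * F w) := by
    funext w
    simp only [Pi.mul_apply, indicator]
    by_cases h : w ∈ Ioi (0:ℝ)
    · rw [if_pos h, if_pos (mem_Ioi.mp h)]
    · rw [if_neg h, if_neg (fun h' => h (mem_Ioi.mpr h'))]
      simp
  rw [hind, lintegral_indicator measurableSet_Ioi]
  have hFval : ∀ w ∈ Ioi (0:ℝ), ENNReal.ofReal (exp (-w)) * F w
      = ∫⁻ y in s, ENNReal.ofReal (exp (-w) * ((√w * (δ*σ))⁻¹ *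
          gaussianPDFReal 0 1 ((y - (μ + δ*ξ*w))/(√w * (δ*σ))))) := by
    intro w hw
    have hw0 : (0:ℝ) < w := hw
    have hk : 0 < √w * (δ*σ) := by positivity
    have hpre : Prod.mk w ⁻¹' (g ⁻¹' s)
        = (fun z : ℝ => (μ + δ*ξ*w) + (√w * (δ*σ))*z) ⁻¹' s := by
      rfl
    rw [hFdef]
    simp only
    rw [hpre, gaussian_affine hk hs, ← lintegral_const_mul' _ _ ENNReal.ofReal_ne_top]
    apply setLIntegral_congr_fun hs
    intro y _
    beta_reduce
    rw [← ENNReal.ofReal_mul (exp_pos _).le]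
  rw [setLIntegral_congr_fun measurableSet_Ioi hFval]
  have hswap : ∫⁻ w in Ioi (0:ℝ), ∫⁻ y in s, ENNReal.ofReal
        (exp (-w) * ((√w * (δ*σ))⁻¹ *
          gaussianPDFReal 0 1 ((y - (μ + δ*ξ*w))/(√w * (δ*σ)))))
      = ∫⁻ y in s, ∫⁻ w in Ioi (0:ℝ), ENNReal.ofReal
        (exp (-w) * ((√w * (δ*σ))⁻¹ *
          gaussianPDFReal 0 1 ((y - (μ + δ*ξ*w))/(√w * (δ*σ))))) := by
    apply lintegral_lintegral_swap
    apply Measurable.aemeasurable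
    apply ENNReal.measurable_ofReal.comp
    apply Measurable.mul
    · exact (measurable_fst.neg.exp)
    · apply Measurable.mul
      · exact ((measurable_fst.sqrt.mul measurable_const).inv)
      · exact (measurable_gaussianPDFReal 0 1).comp
          ((measurable_snd.sub (measurable_const.add (measurable_fst.const_mul _))).div
            (measurable_fst.sqrt.mul measurable_const))
  rw [hswap]
  apply setLIntegral_congr_fun hs
  intro y _
  exact mixture_full hτ1 hτ2 hδ hξ hσ y μ
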